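/- Let Ω ⊆ ℝⁿ be open, σ : Ω → M_{n×m}(ℝ) a C¹ matrix field with columns σ₁,…,σ_m, and U ∈ C²(Ω). Set q(x) = σ(x)ᵀ∇U(x) ∈ ℝᵐ, G(x) = |q(x)|² (the squared Hamiltonian H²(x,∇U(x)) for H(x,p) = |σ(x)ᵀp|), and let S(x) be the m×m matrix S(x) = σ(x)ᵀ D²U(x) σ(x) + ((Dσ_j(x)σ_i(x))·∇U(x))_{i,j=1,…,m}, with symmetric part S*(x) = (S(x) + S(x)ᵀ)/2. Then for every x ∈ Ω the identity −∇G(x) · (2σ(x)σ(x)ᵀ∇U(x)) = −4 ⟨S*(x) q(x), q(x)⟩ holds; in particular, if S*(x) is negative semidefinite for all x ∈ Ω, then U satisfies the Aronsson differential inequality −∇(H²(x,∇U(x))) · (H²)_p(x,∇U(x)) ≥ 0 pointwise in Ω. -/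

import Mathlib

open Set
open scoped RealInnerProductSpace

/-- The `j`-th column of the matrix field `σ`, as a vector field. -/
noncomputable def colVF {n m : ℕ}
    (σ : EuclideanSpace ℝ (Fin n) → Matrix (Fin n) (Fin m) ℝ) (j : Fin m)
    (x : EuclideanSpace ℝ (Fin n)) : EuclideanSpace ℝ (Fin n) :=
  (EuclideanSpace.equiv (Fin n) ℝ).symm (fun i => σ x i j)

/-- `q(x) = σ(x)ᵀ∇U(x) ∈ ℝᵐ`. -/
noncomputable def qVF {n m : ℕ}
    (σ : EuclideanSpace ℝ (Fin n) → Matrix (Fin n) (Fin m) ℝ)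
    (U : EuclideanSpace ℝ (Fin n) → ℝ) (x : EuclideanSpace ℝ (Fin n)) :
    EuclideanSpace ℝ (Fin m) :=
  (EuclideanSpace.equiv (Fin m) ℝ).symm (fun j => ⟪colVF σ j x, gradient U x⟫)

/-- `G(x) = |σ(x)ᵀ∇U(x)|² = H²(x,∇U(x))` for `H(x,p) = |σ(x)ᵀp|`. -/
noncomputable def GFun {n m : ℕ}
    (σ : EuclideanSpace ℝ (Fin n) → Matrix (Fin n) (Fin m) ℝ)
    (U : EuclideanSpace ℝ (Fin n) → ℝ) (x : EuclideanSpace ℝ (Fin n)) : ℝ :=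
  ‖qVF σ U x‖ ^ 2

/-- The matrix `S(x) = σ(x)ᵀ D²U(x) σ(x) + ((Dσ_j(x)σ_i(x))·∇U(x))_{i,j}`. -/
noncomputable def SMat {n m : ℕ}
    (σ : EuclideanSpace ℝ (Fin n) → Matrix (Fin n) (Fin m) ℝ)
    (U : EuclideanSpace ℝ (Fin n) → ℝ) (x : EuclideanSpace ℝ (Fin n)) :
    Matrix (Fin m) (Fin m) ℝ :=
  Matrix.of fun i j =>
    ⟪colVF σ i x, fderiv ℝ (gradient U) x (colVF σ j x)⟫ +
      ⟪fderiv ℝ (colVF σ j) x (colVF σ i x), gradient U x⟫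

/-- `(H²)_p(x,∇U(x)) = 2σ(x)σ(x)ᵀ∇U(x) = 2σ(x)q(x)`. -/
noncomputable def FVec {n m : ℕ}
    (σ : EuclideanSpace ℝ (Fin n) → Matrix (Fin n) (Fin m) ℝ)
    (U : EuclideanSpace ℝ (Fin n) → ℝ) (x : EuclideanSpace ℝ (Fin n)) :
    EuclideanSpace ℝ (Fin n) :=
  (EuclideanSpace.equiv (Fin n) ℝ).symm
    (fun k => 2 * ∑ j : Fin m, σ x k j * qVF σ U x j)

lemma sum_swap_aux {m : ℕ} (f : Fin m → Fin m → ℝ) :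
    ∑ i : Fin m, ∑ j : Fin m, f i j = ∑ i : Fin m, ∑ j : Fin m, f j i :=
  Finset.sum_comm

lemma alg_aux {m : ℕ} (A B : Fin m → Fin m → ℝ) (q : Fin m → ℝ) :
    -(∑ j : Fin m, 2 * q j *
        ((∑ i : Fin m, 2 * q i * A j i) + ∑ i : Fin m, 2 * q i * B i j)) =
      -4 * ∑ i : Fin m, ∑ j : Fin m,
        ((A i j + B i j + (A j i + B j i)) / 2) * q j * q i := by
  have h1 : ∑ i : Fin m, ∑ j : Fin m, A j i * q j * q i
      = ∑ i : Fin m, ∑ j : Fin m, A i j * q j * q i := by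
    rw [sum_swap_aux (fun i j => A j i * q j * q i)]
    exact Finset.sum_congr rfl fun i _ => Finset.sum_congr rfl fun j _ => by ring
  have h2 : ∑ i : Fin m, ∑ j : Fin m, B j i * q j * q i
      = ∑ i : Fin m, ∑ j : Fin m, B i j * q j * q i := by
    rw [sum_swap_aux (fun i j => B j i * q j * q i)]
    exact Finset.sum_congr rfl fun i _ => Finset.sum_congr rfl fun j _ => by ring
  have hL : ∑ j : Fin m, 2 * q j *
        ((∑ i : Fin m, 2 * q i * A j i) + ∑ i : Fin m, 2 * q i * B i j)
      = 4 * (∑ i : Fin m, ∑ j : Fin m, A i j * q j * q i)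
        + 4 * (∑ i : Fin m, ∑ j : Fin m, B j i * q j * q i) := by
    rw [Finset.mul_sum, Finset.mul_sum, ← Finset.sum_add_distrib]
    refine Finset.sum_congr rfl fun i _ => ?_
    rw [mul_add, Finset.mul_sum, Finset.mul_sum, Finset.mul_sum, Finset.mul_sum]
    congr 1 <;> exact Finset.sum_congr rfl fun j _ => by ring
  have hR : ∑ i : Fin m, ∑ j : Fin m,
        ((A i j + B i j + (A j i + B j i)) / 2) * q j * q i
      = ((∑ i : Fin m, ∑ j : Fin m, A i j * q j * q i)
          + (∑ i : Fin m, ∑ j : Fin m, B i j * q j * q i)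
          + ((∑ i : Fin m, ∑ j : Fin m, A j i * q j * q i)
          + (∑ i : Fin m, ∑ j : Fin m, B j i * q j * q i))) / 2 := by
    have e : ∀ i j, ((A i j + B i j + (A j i + B j i)) / 2) * q j * q i
        = (A i j * q j * q i + B i j * q j * q i
            + (A j i * q j * q i + B j i * q j * q i)) / 2 := fun i j => by ring
    simp only [e, Finset.sum_add_distrib, ← Finset.sum_div]
  rw [hL, hR, h1, h2]
  ring

lemma key_aux {n m : ℕ} (Ω : Set (EuclideanSpace ℝ (Fin n))) (hΩ : IsOpen Ω)
    (σ : EuclideanSpace ℝ (Fin n) → Matrix (Fin n) (Fin m) ℝ)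
    (hσ : ∀ i j, ContDiffOn ℝ 1 (fun x => σ x i j) Ω)
    (U : EuclideanSpace ℝ (Fin n) → ℝ) (hU : ContDiffOn ℝ 2 U Ω)
    (x : EuclideanSpace ℝ (Fin n)) (hx : x ∈ Ω) :
    ∃ DG : EuclideanSpace ℝ (Fin n) →L[ℝ] ℝ,
      HasFDerivAt (GFun σ U) DG x ∧
      -(DG (FVec σ U x)) =
        -4 * ∑ i : Fin m, ∑ j : Fin m,
          ((SMat σ U x i j + SMat σ U x j i) / 2) * qVF σ U x j * qVF σ U x i := by
  have hcol : ∀ j : Fin m, DifferentiableAt ℝ (colVF σ j) x := by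
    intro j
    have h1 : DifferentiableAt ℝ (fun y => (fun i => σ y i j : Fin n → ℝ)) x :=
      differentiableAt_pi.2 fun i =>
        ((hσ i j).contDiffAt (hΩ.mem_nhds hx)).differentiableAt one_ne_zero
    exact ((EuclideanSpace.equiv (Fin n) ℝ).symm.differentiableAt).comp x h1
  have hgrad : DifferentiableAt ℝ (gradient U) x := by
    have h1 : ContDiffAt ℝ 1 (fderiv ℝ U) x :=
      (hU.contDiffAt (hΩ.mem_nhds hx)).fderiv_right (by norm_num)
    have h2 : ContDiffAt ℝ 1 (gradient U) x := by
      have e : gradient U = fun y =>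
          (InnerProductSpace.toDual ℝ (EuclideanSpace ℝ (Fin n))).symm (fderiv ℝ U y) := rfl
      rw [e]
      exact ((InnerProductSpace.toDual ℝ
        (EuclideanSpace ℝ (Fin n))).symm.contDiff.contDiffAt).comp x h1
    exact h2.differentiableAt one_ne_zero
  have hq : ∀ j : Fin m,
      DifferentiableAt ℝ (fun y => ⟪colVF σ j y, gradient U y⟫) x :=
    fun j => (hcol j).inner ℝ hgrad
  have hGeq : GFun σ U = fun y => ∑ j : Fin m, ⟪colVF σ j y, gradient U y⟫ ^ 2 := by
    funext y
    rw [show GFun σ U y = ‖qVF σ U y‖ ^ 2 from rfl, EuclideanSpace.norm_eq,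
      Real.sq_sqrt (by positivity)]
    exact Finset.sum_congr rfl fun j _ => by rw [Real.norm_eq_abs, sq_abs]; rfl
  have hsq : ∀ j : Fin m, HasFDerivAt (fun y => ⟪colVF σ j y, gradient U y⟫ ^ 2)
      ((2 * qVF σ U x j) • fderiv ℝ (fun y => ⟪colVF σ j y, gradient U y⟫) x) x := by
    intro j
    have h := ((hq j).hasFDerivAt).mul ((hq j).hasFDerivAt)
    have e : (fun y => ⟪colVF σ j y, gradient U y⟫ ^ 2)
        = fun y => ⟪colVF σ j y, gradient U y⟫ * ⟪colVF σ j y, gradient U y⟫ := by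
      funext y; ring
    rw [e, show (2 : ℝ) * qVF σ U x j = qVF σ U x j + qVF σ U x j by ring, add_smul]
    exact h
  have hDG : HasFDerivAt (GFun σ U)
      (∑ j : Fin m, (2 * qVF σ U x j) •
        fderiv ℝ (fun y => ⟪colVF σ j y, gradient U y⟫) x) x := by
    rw [hGeq]
    exact HasFDerivAt.fun_sum fun j _ => hsq j
  refine ⟨_, hDG, ?_⟩
  have hw : FVec σ U x = ∑ i : Fin m, (2 * qVF σ U x i) • colVF σ i x := by
    apply (EuclideanSpace.equiv (Fin n) ℝ).injective
    funext k
    simp only [FVec, ContinuousLinearEquiv.apply_symm_apply, map_sum, map_smul]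
    simp only [Finset.sum_apply, Pi.smul_apply, smul_eq_mul, Finset.mul_sum]
    exact Finset.sum_congr rfl fun i _ => by
      rw [show (EuclideanSpace.equiv (Fin n) ℝ) (colVF σ i x) k = σ x k i from rfl]; ring
  have hval : (∑ j : Fin m, (2 * qVF σ U x j) •
        fderiv ℝ (fun y => ⟪colVF σ j y, gradient U y⟫) x) (FVec σ U x)
      = ∑ j : Fin m, 2 * qVF σ U x j *
          ((∑ i : Fin m, 2 * qVF σ U x i *
              ⟪colVF σ j x, fderiv ℝ (gradient U) x (colVF σ i x)⟫)
            + ∑ i : Fin m, 2 * qVF σ U x i *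
              ⟪fderiv ℝ (colVF σ j) x (colVF σ i x), gradient U x⟫) := by
    rw [ContinuousLinearMap.sum_apply]
    refine Finset.sum_congr rfl fun j _ => ?_
    rw [ContinuousLinearMap.smul_apply, smul_eq_mul]
    congr 1
    rw [fderiv_inner_apply ℝ (hcol j) hgrad, hw]
    simp only [map_sum, map_smul, inner_sum, sum_inner, real_inner_smul_left,
      real_inner_smul_right, smul_eq_mul]
  rw [hval]
  have hSMat : ∀ i j : Fin m, SMat σ U x i j
      = ⟪colVF σ i x, fderiv ℝ (gradient U) x (colVF σ j x)⟫
        + ⟪fderiv ℝ (colVF σ j) x (colVF σ i x), gradient U x⟫ := fun i j => rfl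
  simp only [hSMat]
  exact alg_aux
    (fun i j => ⟪colVF σ i x, fderiv ℝ (gradient U) x (colVF σ j x)⟫)
    (fun i j => ⟪fderiv ℝ (colVF σ j) x (colVF σ i x), gradient U x⟫)
    (fun j => qVF σ U x j)

/-- the identity
`-∇G(x)·(2σ(x)σ(x)ᵀ∇U(x)) = -4⟨S*(x)q(x), q(x)⟩` for the squared Hamiltonian
`G(x) = H²(x,∇U(x))`, `H(x,p) = |σ(x)ᵀp|`; in particular if `S*` is negative
semidefinite on `Ω` then `U` satisfies the Aronsson differential inequality
`-∇(H²(x,∇U(x)))·(H²)_p(x,∇U(x)) ≥ 0` pointwise in `Ω`. -/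
theorem stmt_19 {n m : ℕ} (Ω : Set (EuclideanSpace ℝ (Fin n))) (hΩ : IsOpen Ω)
    (σ : EuclideanSpace ℝ (Fin n) → Matrix (Fin n) (Fin m) ℝ)
    (hσ : ∀ i j, ContDiffOn ℝ 1 (fun x => σ x i j) Ω)
    (U : EuclideanSpace ℝ (Fin n) → ℝ) (hU : ContDiffOn ℝ 2 U Ω) :
    (∀ x ∈ Ω, ∃ DG : EuclideanSpace ℝ (Fin n) →L[ℝ] ℝ,
      HasFDerivAt (GFun σ U) DG x ∧
      -(DG (FVec σ U x)) =
        -4 * ∑ i : Fin m, ∑ j : Fin m,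
          ((SMat σ U x i j + SMat σ U x j i) / 2) * qVF σ U x j * qVF σ U x i) ∧
    ((∀ x ∈ Ω, ∀ v : Fin m → ℝ,
        (∑ i : Fin m, ∑ j : Fin m,
          ((SMat σ U x i j + SMat σ U x j i) / 2) * v j * v i) ≤ 0) →
      ∀ x ∈ Ω, ∃ DG : EuclideanSpace ℝ (Fin n) →L[ℝ] ℝ,
        HasFDerivAt (GFun σ U) DG x ∧ 0 ≤ -(DG (FVec σ U x))) := by
  refine ⟨fun x hx => key_aux Ω hΩ σ hσ U hU x hx, fun hyp x hx => ?_⟩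
  obtain ⟨DG, h1, h2⟩ := key_aux Ω hΩ σ hσ U hU x hx
  refine ⟨DG, h1, ?_⟩
  rw [h2]
  have hs := hyp x hx (fun j => qVF σ U x j)
  simp only at hs
  linarith
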